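/- Let 𝒯 = {T1, …, Tt} be a set of trees on the same label set 𝒳. (i) For every tree T on label set 𝒳 there exists a leaf-disagreement for 𝒯 of size at most Σ_{Ti∈𝒯} d_LR(T, Ti). (ii) For every leaf-disagreement for 𝒯 of size v there exists a tree T on label set 𝒳 with Σ_{Ti∈𝒯} d_LR(T, Ti) ≤ v. Consequently, MASTRL(𝒯) = min over all trees T on 𝒳 of Σ_{Ti∈𝒯} d_LR(T, Ti). -/

import Mathlib

/-!
Common framework: rooted binary trees with leaves bijectively labeled by a
finite label set, leaf removal, restriction, the leaf-removal distance `d_LR`,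
compatibility, leaf-disagreements, triplets, LPR moves, etc.
-/

universe u

/-- A rooted binary tree whose leaves carry labels from `α`. -/
inductive LTree (α : Type u) : Type u where
  | leaf : α → LTree α
  | node : LTree α → LTree α → LTree α

namespace LTree

variable {α : Type u} [DecidableEq α]

/-- The set of leaf labels of a tree. -/
def labels : LTree α → Finset α
  | leaf a => {a}
  | node l r => labels l ∪ labels r

/-- A tree is `Good` when its leaves carry pairwise distinct labels
(i.e. the leaves are bijectively labeled). -/
def Good : LTree α → Prop
  | leaf _ => True
  | node l r => Good l ∧ Good r ∧ Disjoint (labels l) (labels r)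

/-- `T` is a (rooted binary, uniquely leaf-labeled) tree on label set `𝒳`. -/
def IsTreeOn (T : LTree α) (𝒳 : Finset α) : Prop :=
  Good T ∧ labels T = 𝒳

/-- Equality of rooted trees: children of a node are unordered. -/
inductive Iso : LTree α → LTree α → Prop
  | leaf (a : α) : Iso (leaf a) (leaf a)
  | node {l₁ r₁ l₂ r₂ : LTree α} :
      Iso l₁ l₂ → Iso r₁ r₂ → Iso (node l₁ r₁) (node l₂ r₂)
  | swap {l₁ r₁ l₂ r₂ : LTree α} :
      Iso l₁ r₂ → Iso r₁ l₂ → Iso (node l₁ r₁) (node l₂ r₂)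

/-- Equality of possibly empty trees (`none` is the empty tree). -/
def OptIso : Option (LTree α) → Option (LTree α) → Prop
  | none, none => True
  | some t₁, some t₂ => Iso t₁ t₂
  | _, _ => False

/-- Restriction `T|_S`: keep exactly the leaves with labels in `S`, suppressing
the resulting degree-two vertices and degree-one roots; the result is `none`
when no leaf survives. -/
def restrict : LTree α → Finset α → Option (LTree α)
  | leaf a, S => if a ∈ S then some (leaf a) else none
  | node l r, S =>
    match restrict l S, restrict r S with
    | some l', some r' => some (node l' r')
    | some l', none => some l'
    | none, some r' => some r'
    | none, none => none

/-- `T − X`: remove from `T` every leaf whose label lies in `X`. -/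
def remove (T : LTree α) (X : Finset α) : Option (LTree α) :=
  restrict T (labels T \ X)

/-- The leaf-removal distance `d_LR(T₁,T₂)`: the minimum number of labels
whose removal makes the two trees equal. -/
noncomputable def dLR (T₁ T₂ : LTree α) : ℕ :=
  sInf {n | ∃ X : Finset α, X ⊆ labels T₁ ∪ labels T₂ ∧ X.card = n ∧
    OptIso (remove T₁ X) (remove T₂ X)}

def labelsO : Option (LTree α) → Finset α
  | none => ∅
  | some t => labels t

def GoodO : Option (LTree α) → Prop
  | none => True
  | some t => Good t

def restrictO : Option (LTree α) → Finset α → Option (LTree α)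
  | none, _ => none
  | some t, S => restrict t S

/-- A family of (possibly empty) trees is compatible if there is a single tree,
on the union of their label sets, which displays all of them. -/
def CompatibleFamO {ι : Type*} (f : ι → Option (LTree α)) : Prop :=
  ∃ TO : Option (LTree α), GoodO TO ∧
    (↑(labelsO TO) : Set α) = (⋃ i, ↑(labelsO (f i))) ∧
    ∀ i, OptIso (restrictO TO (labelsO (f i))) (f i)

/-- A family of trees is compatible if a single tree displays all of them. -/
def CompatibleFam {ι : Type*} (𝒯 : ι → LTree α) : Prop :=
  CompatibleFamO fun i => some (𝒯 i)

/-- `X` is a leaf-disagreement for the family `𝒯`: removing `X i` from `𝒯 i`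
yields a compatible family. -/
def IsLeafDisagreement {ι : Type*} (𝒯 : ι → LTree α) (X : ι → Finset α) : Prop :=
  CompatibleFamO fun i => remove (𝒯 i) (X i)

/-- `X'` is a label-disagreement for the family `𝒯`. -/
def IsLabelDisagreement {ι : Type*} (𝒯 : ι → LTree α) (X' : Finset α) : Prop :=
  CompatibleFamO fun i => remove (𝒯 i) X'

/-- `MASTRL 𝒯`: the minimum size of a leaf-disagreement for `𝒯`. -/
noncomputable def MASTRL {t : ℕ} (𝒯 : Fin t → LTree α) : ℕ :=
  sInf {v | ∃ X : Fin t → Finset α, (∀ i, X i ⊆ labels (𝒯 i)) ∧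
    (∑ i, (X i).card) = v ∧ IsLeafDisagreement 𝒯 X}

/-- The triplet `ab|c` (as a tree). -/
def tripletTree (a b c : α) : LTree α := node (node (leaf a) (leaf b)) (leaf c)

/-- A rooted triplet: a tree with exactly three (distinctly labeled) leaves. -/
def IsTriplet (R : LTree α) : Prop := Good R ∧ (labels R).card = 3

/-- `ab|c` is a triplet of `T`, i.e. `T|_{a,b,c} = ab|c`. -/
def IsTripletOf (T : LTree α) (a b c : α) : Prop :=
  OptIso (restrict T {a, b, c}) (some (tripletTree a b c))

/-- `tr(T)`: the triplet decomposition of `T`. -/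
def trSet (T : LTree α) : Set (LTree α) :=
  {R | ∃ a b c : α, R = tripletTree a b c ∧ IsTripletOf T a b c}

/-- A set of trees is compatible: some tree on the union of the label sets
displays every member. -/
def CompatibleSet (S : Set (LTree α)) : Prop :=
  ∃ TO : Option (LTree α), GoodO TO ∧
    (↑(labelsO TO) : Set α) = (⋃ R ∈ S, ↑(labels R)) ∧
    ∀ R ∈ S, OptIso (restrictO TO (labels R)) (some R)

/-- `MINRTI ℛ`: the minimum number of triplets to delete from `ℛ` so that the
remaining triplets are compatible. -/
noncomputable def MINRTI {t : ℕ} (R : Fin t → LTree α) : ℕ :=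
  sInf {m | ∃ s : Finset (Fin t), s.card = m ∧
    CompatibleFam (fun i : {i : Fin t // i ∉ s} => R i.1)}

/-- Graft the leaf `x` at the position (edge) addressed by `p` in `T`.
The empty address grafts `x` above the root of `T` (the `⊥` case); the address
of an internal/leaf vertex `v` grafts `x` on the edge between `v` and its
parent.  `none` when the address is invalid. -/
def graftAt (x : α) : LTree α → List Bool → Option (LTree α)
  | T, [] => some (node (leaf x) T)
  | leaf _, _ :: _ => none
  | node l r, b :: p =>
    if b then (graftAt x l p).map (fun l' => node l' r)
    else (graftAt x r p).map (fun r' => node l r')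

/-- `T'` is obtained from `T` by a single LPR (leaf prune-and-regraft) move on
the leaf `x`: prune `x` from `T` and regraft it, either on an edge of
`T − {x}` or above its root. -/
def LPRStep (x : α) (T T' : LTree α) : Prop :=
  (remove T {x} = none ∧ T' = leaf x) ∨
  ∃ T₀ p, remove T {x} = some T₀ ∧ graftAt x T₀ p = some T'

/-- `TurnsInto L T T'`: the LPR sequence with (ordered) leaf list `L` turns
`T` into `T'`. -/
inductive TurnsInto : List α → LTree α → LTree α → Prop
  | nil {T T' : LTree α} : Iso T T' → TurnsInto [] T T'
  | cons {x : α} {xs : List α} {T T'' T' : LTree α} :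
      LPRStep x T T'' → TurnsInto xs T'' T' → TurnsInto (x :: xs) T T'

/-- `confset(T₁,T₂)`: the collection of 3-label sets `{a,b,c}` such that
`T₁` contains a triplet on `{a,b,c}` conflicting with a triplet of `T₂`. -/
def confset (T₁ T₂ : LTree α) : Set (Finset α) :=
  {s | ∃ a b c : α, s = {a, b, c} ∧ IsTripletOf T₁ a b c ∧
    (IsTripletOf T₂ a c b ∨ IsTripletOf T₂ b c a)}

/-- `X` is a minimal disagreement between `T₁` and `T₂`. -/
def MinimalDisagreement (T₁ T₂ : LTree α) (X : Finset α) : Prop :=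
  X ⊆ labels T₁ ∪ labels T₂ ∧
  OptIso (remove T₁ X) (remove T₂ X) ∧
  ∀ X' ⊂ X, ¬ OptIso (remove T₁ X') (remove T₂ X')

/-- `u` is (the rooted subtree hanging at) a node of `T`. -/
inductive IsSubtree : LTree α → LTree α → Prop
  | refl (T : LTree α) : IsSubtree T T
  | left {u l r : LTree α} : IsSubtree u l → IsSubtree u (node l r)
  | right {u l r : LTree α} : IsSubtree u r → IsSubtree u (node l r)

/-- `u` is the least common ancestor in `T` of the labels in `Z`. -/
def IsLCA (T : LTree α) (Z : Finset α) (u : LTree α) : Prop :=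
  IsSubtree u T ∧ Z ⊆ labels u ∧
    ∀ w, IsSubtree w T → Z ⊆ labels w → IsSubtree u w

end LTree

open LTree

/-! ### Auxiliary lemmas -/

namespace LTree

variable {α : Type u} [DecidableEq α]

lemma labels_nonempty (T : LTree α) : (labels T).Nonempty := by
  induction T with
  | leaf a => exact ⟨a, by simp [labels]⟩
  | node l r ihl ihr => exact ihl.mono (by simp [labels, Finset.subset_union_left])

lemma restrict_node (l r : LTree α) (S : Finset α) :
    restrict (node l r) S =
      match restrict l S, restrict r S with
      | some l', some r' => some (node l' r')
      | some l', none => some l'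
      | none, some r' => some r'
      | none, none => none := rfl

lemma labelsO_restrict (T : LTree α) (S : Finset α) :
    labelsO (restrict T S) = labels T ∩ S := by
  induction T with
  | leaf a =>
    by_cases h : a ∈ S <;>
      simp [restrict, labels, labelsO, h, Finset.singleton_inter_of_mem,
        Finset.singleton_inter_of_notMem]
  | node l r ihl ihr =>
    have hd : labels (node l r) ∩ S = labels l ∩ S ∪ labels r ∩ S := by
      simp [labels, Finset.union_inter_distrib_right]
    rw [hd, ← ihl, ← ihr, restrict_node]
    cases hl : restrict l S <;> cases hr : restrict r S <;>
      simp [labelsO, labels]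

lemma restrict_eq_none_of_disjoint {T : LTree α} {S : Finset α}
    (h : Disjoint (labels T) S) : restrict T S = none := by
  cases hr : restrict T S with
  | none => rfl
  | some u =>
    exfalso
    have h1 : labelsO (restrict T S) = labels T ∩ S := labelsO_restrict T S
    rw [hr] at h1
    have : labels u = ∅ := by
      rw [show (labelsO (some u) : Finset α) = labels u from rfl] at h1
      rw [h1, Finset.disjoint_iff_inter_eq_empty.mp h]
    exact absurd this (labels_nonempty u).ne_empty

lemma goodO_restrict {T : LTree α} (hT : Good T) (S : Finset α) :
    GoodO (restrict T S) := by
  induction T with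
  | leaf a => by_cases h : a ∈ S <;> simp [restrict, h, GoodO, Good]
  | node l r ihl ihr =>
    obtain ⟨hgl, hgr, hd⟩ := hT
    have Hl := ihl hgl
    have Hr := ihr hgr
    have e1 := labelsO_restrict l S
    have e2 := labelsO_restrict r S
    rw [restrict_node]
    cases hl : restrict l S <;> cases hr : restrict r S <;>
      rw [hl] at Hl e1 <;> rw [hr] at Hr e2
    · trivial
    · exact Hr
    · exact Hl
    · exact ⟨Hl, Hr, hd.mono (le_trans (le_of_eq e1) Finset.inter_subset_left)
        (le_trans (le_of_eq e2) Finset.inter_subset_left)⟩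

lemma restrictO_restrict (T : LTree α) (A B : Finset α) :
    restrictO (restrict T A) B = restrict T (A ∩ B) := by
  induction T with
  | leaf a =>
    by_cases ha : a ∈ A <;> by_cases hb : a ∈ B <;>
      simp [restrict, restrictO, ha, hb, Finset.mem_inter]
  | node l r ihl ihr =>
    have key : ∀ u : LTree α, restrict u A = none → restrict u (A ∩ B) = none := by
      intro u hu
      apply restrict_eq_none_of_disjoint
      have h0 : labels u ∩ A = ∅ := by
        have := labelsO_restrict u A; rw [hu] at this
        exact this.symm
      rw [Finset.disjoint_iff_inter_eq_empty, ← Finset.inter_assoc, h0,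
        Finset.empty_inter]
    rw [restrict_node l r A, restrict_node l r (A ∩ B)]
    cases hl : restrict l A <;> cases hr : restrict r A <;>
      rw [hl] at ihl <;> rw [hr] at ihr
    · rw [key l hl, key r hr]; rfl
    · rename_i r'
      rw [key l hl, ← ihr]
      cases hb : restrict r' B <;> simp [restrictO, hb]
    · rename_i l'
      rw [key r hr, ← ihl]
      cases hb : restrict l' B <;> simp [restrictO, hb]
    · rw [← ihl, ← ihr]
      simp only [restrictO]
      rw [restrict_node]

lemma labelsO_remove (T : LTree α) (X : Finset α) :
    labelsO (remove T X) = labels T \ X := by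
  rw [remove, labelsO_restrict]
  exact Finset.inter_eq_right.mpr Finset.sdiff_subset

/-- Attach the leaves in `l` (in order) above the (possibly empty) tree `t`. -/
def extendT : List α → Option (LTree α) → Option (LTree α)
  | [], t => t
  | a :: l, t =>
    match extendT l t with
    | none => some (leaf a)
    | some u => some (node (leaf a) u)

lemma labelsO_extendT (l : List α) (t : Option (LTree α)) :
    labelsO (extendT l t) = l.toFinset ∪ labelsO t := by
  induction l with
  | nil => simp [extendT]
  | cons a l ih =>
    rw [show extendT (a :: l) t = match extendT l t with
      | none => some (leaf a)
      | some u => some (node (leaf a) u) from rfl]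
    cases h : extendT l t with
    | none =>
      rw [h] at ih
      show ({a} : Finset α) = (a :: l).toFinset ∪ labelsO t
      rw [List.toFinset_cons, Finset.insert_union, ← ih]
      show ({a} : Finset α) = insert a ∅
      simp
    | some u =>
      rw [h] at ih
      show ({a} : Finset α) ∪ labels u = (a :: l).toFinset ∪ labelsO t
      rw [List.toFinset_cons, Finset.insert_union, ← ih, Finset.insert_eq]
      rfl

lemma goodO_extendT (l : List α) (t : Option (LTree α)) (hnd : l.Nodup)
    (hdisj : ∀ a ∈ l, a ∉ labelsO t) (hg : GoodO t) : GoodO (extendT l t) := by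
  induction l with
  | nil => exact hg
  | cons a l ih =>
    have hnd' := hnd
    rw [List.nodup_cons] at hnd'
    have IH := ih hnd'.2 (fun b hb => hdisj b (List.mem_cons_of_mem a hb))
    have hlab := labelsO_extendT l t
    rw [show extendT (a :: l) t = match extendT l t with
      | none => some (leaf a)
      | some u => some (node (leaf a) u) from rfl]
    cases h : extendT l t with
    | none => trivial
    | some u =>
      rw [h] at IH hlab
      refine ⟨trivial, IH, ?_⟩
      show Disjoint ({a} : Finset α) (labels u)
      rw [Finset.disjoint_singleton_left]
      intro hmem
      have h2 : a ∈ l.toFinset ∪ labelsO t := by rw [← hlab]; exact hmem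
      rcases Finset.mem_union.mp h2 with h1 | h1
      · exact hnd'.1 (List.mem_toFinset.mp h1)
      · exact hdisj a (List.mem_cons_self (a := a) (l := l)) h1

lemma restrictO_extendT (l : List α) (t : Option (LTree α)) (S : Finset α)
    (h : ∀ a ∈ l, a ∉ S) : restrictO (extendT l t) S = restrictO t S := by
  induction l with
  | nil => rfl
  | cons a l ih =>
    have IH := ih (fun b hb => h b (List.mem_cons_of_mem a hb))
    have ha : a ∉ S := h a (List.mem_cons_self (a := a) (l := l))
    rw [show extendT (a :: l) t = match extendT l t with
      | none => some (leaf a)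
      | some u => some (node (leaf a) u) from rfl]
    cases hh : extendT l t with
    | none =>
      rw [hh] at IH
      rw [← IH]
      show restrict (leaf a) S = none
      simp [restrict, ha]
    | some u =>
      rw [hh] at IH
      rw [← IH]
      show restrict (node (leaf a) u) S = restrict u S
      rw [restrict_node, show restrict (leaf a) S = none by simp [restrict, ha]]
      cases hu : restrict u S <;> rfl

lemma extendT_isSome (l : List α) (t : Option (LTree α))
    (h : t.isSome ∨ l ≠ []) : (extendT l t).isSome := by
  cases l with
  | nil =>
    rcases h with h | h
    · exact h
    · exact absurd rfl h
  | cons a l =>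
    rw [show extendT (a :: l) t = match extendT l t with
      | none => some (leaf a)
      | some u => some (node (leaf a) u) from rfl]
    cases extendT l t <;> rfl

lemma exists_min_dLR (T₁ T₂ : LTree α) :
    ∃ X : Finset α, X ⊆ labels T₁ ∪ labels T₂ ∧ X.card = dLR T₁ T₂ ∧
      OptIso (remove T₁ X) (remove T₂ X) := by
  have hne : {n | ∃ X : Finset α, X ⊆ labels T₁ ∪ labels T₂ ∧ X.card = n ∧
      OptIso (remove T₁ X) (remove T₂ X)}.Nonempty := by
    refine ⟨(labels T₁ ∪ labels T₂).card, labels T₁ ∪ labels T₂, subset_rfl, rfl, ?_⟩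
    have h1 : remove T₁ (labels T₁ ∪ labels T₂) = none := by
      rw [remove, Finset.sdiff_eq_empty_iff_subset.mpr Finset.subset_union_left]
      exact restrict_eq_none_of_disjoint (Finset.disjoint_empty_right _)
    have h2 : remove T₂ (labels T₁ ∪ labels T₂) = none := by
      rw [remove, Finset.sdiff_eq_empty_iff_subset.mpr Finset.subset_union_right]
      exact restrict_eq_none_of_disjoint (Finset.disjoint_empty_right _)
    rw [h1, h2]
    trivial
  have := Nat.sInf_mem hne
  obtain ⟨X, h1, h2, h3⟩ := this
  exact ⟨X, h1, h2, h3⟩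

lemma dLR_le (T₁ T₂ : LTree α) (X : Finset α)
    (h1 : X ⊆ labels T₁ ∪ labels T₂)
    (h2 : OptIso (remove T₁ X) (remove T₂ X)) : dLR T₁ T₂ ≤ X.card :=
  Nat.sInf_le ⟨X, h1, rfl, h2⟩

end LTree

/-- Lemma 1 of the paper.  Let `𝒯 = {T₁,…,T_t}` be trees on the
same label set `𝒳`.  (i) Every tree `T` on `𝒳` yields a leaf-disagreement of size
at most `∑ᵢ d_LR(T, Tᵢ)`.  (ii) Every leaf-disagreement of size `v` yields a tree
`T` on `𝒳` with `∑ᵢ d_LR(T, Tᵢ) ≤ v`.  Consequently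
`MASTRL 𝒯 = min_{T on 𝒳} ∑ᵢ d_LR(T, Tᵢ)`. -/
theorem astlr_lrconsensus_equivalence {α : Type u} [DecidableEq α] {t : ℕ}
    (ht : 0 < t) (𝒳 : Finset α) (𝒯 : Fin t → LTree α)
    (h𝒯 : ∀ i, IsTreeOn (𝒯 i) 𝒳) :
    (∀ T : LTree α, IsTreeOn T 𝒳 →
        ∃ X : Fin t → Finset α, (∀ i, X i ⊆ 𝒳) ∧ IsLeafDisagreement 𝒯 X ∧
          (∑ i, (X i).card) ≤ ∑ i, dLR T (𝒯 i)) ∧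
    (∀ (X : Fin t → Finset α) (v : ℕ), (∀ i, X i ⊆ 𝒳) →
        IsLeafDisagreement 𝒯 X → (∑ i, (X i).card) = v →
        ∃ T : LTree α, IsTreeOn T 𝒳 ∧ (∑ i, dLR T (𝒯 i)) ≤ v) ∧
    MASTRL 𝒯 =
      sInf {v | ∃ T : LTree α, IsTreeOn T 𝒳 ∧ (∑ i, dLR T (𝒯 i)) = v} := by
  have i0 : Fin t := ⟨0, ht⟩
  -- Part (i)
  have part1 : ∀ T : LTree α, IsTreeOn T 𝒳 →
      ∃ X : Fin t → Finset α, (∀ i, X i ⊆ 𝒳) ∧ IsLeafDisagreement 𝒯 X ∧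
        (∑ i, (X i).card) ≤ ∑ i, dLR T (𝒯 i) := by
    intro T hT
    choose X hX1 hX2 hX3 using fun i => exists_min_dLR T (𝒯 i)
    have hXsub : ∀ i, X i ⊆ 𝒳 := by
      intro i
      have := hX1 i
      rwa [hT.2, (h𝒯 i).2, Finset.union_self] at this
    have hremT : ∀ i, remove T (X i) = restrict T (𝒳 \ X i) := by
      intro i; rw [remove, hT.2]
    have hlabf : ∀ i, labelsO (remove (𝒯 i) (X i)) = 𝒳 \ X i := by
      intro i; rw [labelsO_remove, (h𝒯 i).2]
    set L : Finset α := Finset.univ.biUnion (fun i => 𝒳 \ X i) with hL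
    have hLsub : L ⊆ 𝒳 := Finset.biUnion_subset.mpr (fun i _ => Finset.sdiff_subset)
    have hsubL : ∀ i, 𝒳 \ X i ⊆ L := by
      intro i
      rw [hL]
      exact Finset.subset_biUnion_of_mem (fun j => 𝒳 \ X j) (Finset.mem_univ i)
    refine ⟨X, hXsub, ⟨restrict T L, goodO_restrict hT.1 L, ?_, ?_⟩, ?_⟩
    · rw [show labelsO (restrict T L) = labels T ∩ L from labelsO_restrict T L, hT.2,
        Finset.inter_eq_right.mpr hLsub]
      ext x
      simp [hL, hlabf]
    · intro i
      show OptIso (restrictO (restrict T L) (labelsO (remove (𝒯 i) (X i))))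
        (remove (𝒯 i) (X i))
      rw [hlabf i, restrictO_restrict, Finset.inter_eq_right.mpr (hsubL i), ← hremT i]
      exact hX3 i
    · exact le_of_eq (Finset.sum_congr rfl fun i _ => hX2 i)
  -- Part (ii)
  have part2 : ∀ (X : Fin t → Finset α) (v : ℕ), (∀ i, X i ⊆ 𝒳) →
      IsLeafDisagreement 𝒯 X → (∑ i, (X i).card) = v →
      ∃ T : LTree α, IsTreeOn T 𝒳 ∧ (∑ i, dLR T (𝒯 i)) ≤ v := by
    intro X v hXsub hdis hsum
    obtain ⟨TO, hgood, hlab, hiso⟩ := hdis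
    have hlabf : ∀ i, labelsO (remove (𝒯 i) (X i)) = 𝒳 \ X i := by
      intro i; rw [labelsO_remove, (h𝒯 i).2]
    have hsub' : ∀ i, (𝒳 \ X i : Finset α) ⊆ labelsO TO := by
      intro i x hx
      have hx' : (x : α) ∈ (↑(labelsO TO) : Set α) := by
        rw [hlab]
        exact Set.mem_iUnion.mpr ⟨i, by rw [hlabf i]; exact Finset.mem_coe.mpr hx⟩
      exact Finset.mem_coe.mp hx'
    have hTOsub : labelsO TO ⊆ 𝒳 := by
      intro x hx
      have hx' : (x : α) ∈ (⋃ i, ↑(labelsO (remove (𝒯 i) (X i))) : Set α) := by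
        rw [← hlab]; exact Finset.mem_coe.mpr hx
      obtain ⟨i, hi⟩ := Set.mem_iUnion.mp hx'
      rw [hlabf i] at hi
      exact Finset.sdiff_subset (Finset.mem_coe.mp hi)
    set l : List α := (𝒳 \ labelsO TO).toList with hl
    have h𝒳ne : 𝒳.Nonempty := by
      have := labels_nonempty (𝒯 i0)
      rwa [(h𝒯 i0).2] at this
    have hsome : (extendT l TO).isSome := by
      refine extendT_isSome _ _ ?_
      by_cases hTO : TO = none
      case neg => exact Or.inl (Option.ne_none_iff_isSome.mp hTO)
      case pos =>
        refine Or.inr ?_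
        rw [hl, hTO]
        intro hnil
        have h0 : (𝒳 \ labelsO (none : Option (LTree α))) = ∅ :=
          Finset.toList_eq_nil.mp hnil
        rw [show labelsO (none : Option (LTree α)) = ∅ from rfl,
          Finset.sdiff_empty] at h0
        exact h𝒳ne.ne_empty h0
    obtain ⟨T, hT⟩ := Option.isSome_iff_exists.mp hsome
    have hnodup : l.Nodup := Finset.nodup_toList _
    have hfresh : ∀ a ∈ l, a ∉ labelsO TO := by
      intro a ha
      rw [hl, Finset.mem_toList] at ha
      exact (Finset.mem_sdiff.mp ha).2
    have hlabT : labels T = 𝒳 := by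
      have h := labelsO_extendT l TO
      rw [hT] at h
      have h2 : l.toFinset = 𝒳 \ labelsO TO := by rw [hl, Finset.toList_toFinset]
      rw [h2, Finset.sdiff_union_of_subset hTOsub] at h
      exact h
    have hgoodT : Good T := by
      have h := goodO_extendT l TO hnodup hfresh hgood
      rw [hT] at h
      exact h
    refine ⟨T, ⟨hgoodT, hlabT⟩, ?_⟩
    rw [← hsum]
    refine Finset.sum_le_sum fun i _ => ?_
    apply dLR_le
    · rw [hlabT, (h𝒯 i).2, Finset.union_self]; exact hXsub i
    · have e : remove T (X i) = restrictO TO (labelsO (remove (𝒯 i) (X i))) := by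
        rw [remove, hlabT, hlabf i]
        have h := restrictO_extendT l TO (𝒳 \ X i)
          (fun a ha haS => hfresh a ha (hsub' i haS))
        rw [hT] at h
        exact h
      rw [e]
      exact hiso i
  refine ⟨part1, part2, ?_⟩
  -- Part (iii)
  have hM : MASTRL 𝒯 = sInf {v | ∃ X : Fin t → Finset α,
      (∀ i, X i ⊆ labels (𝒯 i)) ∧ (∑ i, (X i).card) = v ∧
      IsLeafDisagreement 𝒯 X} := rfl
  have hrem𝒳 : ∀ i, remove (𝒯 i) 𝒳 = none := by
    intro i
    rw [remove, (h𝒯 i).2, Finset.sdiff_self]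
    exact restrict_eq_none_of_disjoint (Finset.disjoint_empty_right _)
  have hAne : {v | ∃ X : Fin t → Finset α,
      (∀ i, X i ⊆ labels (𝒯 i)) ∧ (∑ i, (X i).card) = v ∧
      IsLeafDisagreement 𝒯 X}.Nonempty := by
    refine ⟨∑ _i : Fin t, 𝒳.card, fun _ => 𝒳,
      fun i => by rw [(h𝒯 i).2], rfl, none, trivial, ?_, ?_⟩
    · simp [labelsO, hrem𝒳]
    · intro i
      show OptIso (restrictO none (labelsO (remove (𝒯 i) 𝒳))) (remove (𝒯 i) 𝒳)
      rw [hrem𝒳 i]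
      trivial
  have hBne : {v | ∃ T : LTree α, IsTreeOn T 𝒳 ∧ (∑ i, dLR T (𝒯 i)) = v}.Nonempty :=
    ⟨∑ i, dLR (𝒯 i0) (𝒯 i), 𝒯 i0, h𝒯 i0, rfl⟩
  apply le_antisymm
  · obtain ⟨T, hT, hvB⟩ := Nat.sInf_mem hBne
    obtain ⟨X, hs, hdis, hle⟩ := part1 T hT
    calc MASTRL 𝒯 ≤ ∑ i, (X i).card := by
          rw [hM]
          exact Nat.sInf_le ⟨X, fun i => by rw [(h𝒯 i).2]; exact hs i, rfl, hdis⟩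
      _ ≤ ∑ i, dLR T (𝒯 i) := hle
      _ = _ := hvB
  · rw [hM]
    obtain ⟨X, hs, hsum, hdis⟩ := Nat.sInf_mem hAne
    obtain ⟨T, hT, hle⟩ := part2 X _
      (fun i => by rw [← (h𝒯 i).2]; exact hs i) hdis hsum
    exact le_trans (Nat.sInf_le ⟨T, hT, rfl⟩) hle
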